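/- Let K be a field and let B be a commutative and cocommutative bialgebra over K equipped with a scaling, i.e. a map σ : K → (B →ₐ[K] B) into the K-algebra endomorphisms of B respecting the coalgebra structure, such that σ(1) = id, σ(λμ) = σ(λ) ∘ σ(μ), σ(0) = η ∘ ε, and σ(λ + μ) = mul ∘ (σ(λ) ⊗ σ(μ)) ∘ Δ for all λ, μ ∈ K. For a 2×2 matrix M over K define the K-linear map M* : B ⊗ B → B ⊗ B by M*(f ⊗ g) = Σ (σ(M₁₁)f₍₁₎ · σ(M₂₁)g₍₁₎) ⊗ (σ(M₁₂)f₍₂₎ · σ(M₂₂)g₍₂₎) (Sweedler notation). Then for all 2×2 matrices M, N over K one has (M · N)* = N* ∘ M*, i.e. the assignment M ↦ M* is a contravariant monoid action of the multiplicative monoid of 2×2 matrices on B ⊗ B. -/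

import Mathlib

set_option synthInstance.maxHeartbeats 1000000
set_option maxHeartbeats 2000000

open TensorProduct

/-- The induced action of a `2 × 2` matrix `M` on `B ⊗ B`, given in Sweedler notation by
`M* (f ⊗ g) = Σ (σ(M₁₁)f₍₁₎ · σ(M₂₁)g₍₁₎) ⊗ (σ(M₁₂)f₍₂₎ · σ(M₂₂)g₍₂₎)`. -/
noncomputable def inducedMatrixAction (K B : Type*) [Field K] [CommRing B] [Bialgebra K B]
    (σ : K → (B →ₐ[K] B)) (M : Matrix (Fin 2) (Fin 2) K) :
    B ⊗[K] B →ₗ[K] B ⊗[K] B :=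
  (TensorProduct.map (LinearMap.mul' K B) (LinearMap.mul' K B)) ∘ₗ
    (TensorProduct.tensorTensorTensorComm K B B B B).toLinearMap ∘ₗ
    (TensorProduct.map
      (TensorProduct.map (σ (M 0 0)).toLinearMap (σ (M 0 1)).toLinearMap)
      (TensorProduct.map (σ (M 1 0)).toLinearMap (σ (M 1 1)).toLinearMap)) ∘ₗ
    (TensorProduct.map (Coalgebra.comul (R := K) (A := B))
      (Coalgebra.comul (R := K) (A := B)))

namespace InducedMatrixActionAux

open LinearMap

section pure
variable {R M : Type*} [CommRing R] [AddCommGroup M] [Module R M]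

theorem ttc_nat {M₁ M₂ M₃ M₄ N₁ N₂ N₃ N₄ : Type*}
    [AddCommGroup M₁] [AddCommGroup M₂] [AddCommGroup M₃] [AddCommGroup M₄]
    [AddCommGroup N₁] [AddCommGroup N₂] [AddCommGroup N₃] [AddCommGroup N₄]
    [Module R M₁] [Module R M₂] [Module R M₃] [Module R M₄]
    [Module R N₁] [Module R N₂] [Module R N₃] [Module R N₄]
    (f₁ : M₁ →ₗ[R] N₁) (f₂ : M₂ →ₗ[R] N₂) (f₃ : M₃ →ₗ[R] N₃) (f₄ : M₄ →ₗ[R] N₄) :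
    (tensorTensorTensorComm R N₁ N₂ N₃ N₄).toLinearMap ∘ₗ map (map f₁ f₂) (map f₃ f₄)
      = map (map f₁ f₃) (map f₂ f₄) ∘ₗ (tensorTensorTensorComm R M₁ M₂ M₃ M₄).toLinearMap := by
  ext; simp

theorem aux_assoc_nat {M' N P : Type*} [AddCommGroup M'] [AddCommGroup N]
    [AddCommGroup P] [Module R M'] [Module R N] [Module R P] (h : M →ₗ[R] M') :
    h.rTensor (N ⊗[R] P) ∘ₗ (TensorProduct.assoc R M N P).toLinearMap
      = (TensorProduct.assoc R M' N P).toLinearMap ∘ₗ ((h.rTensor N).rTensor P) := by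
  ext; simp

theorem aux_midswap (h : M →ₗ[R] M ⊗[R] M) :
    (tensorTensorTensorComm R M M M M).toLinearMap ∘ₗ
      ((TensorProduct.assoc R (M ⊗[R] M) M M).toLinearMap ∘ₗ
        ((TensorProduct.assoc R M M M).symm.toLinearMap.rTensor M)) ∘ₗ
      ((h.lTensor M).rTensor M)
    = ((TensorProduct.assoc R (M ⊗[R] M) M M).toLinearMap ∘ₗ
        ((TensorProduct.assoc R M M M).symm.toLinearMap.rTensor M)) ∘ₗ
      ((((TensorProduct.comm R M M).toLinearMap ∘ₗ h).lTensor M).rTensor M) := by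
  apply TensorProduct.ext
  apply TensorProduct.ext
  ext x y z
  simp only [compr₂ₛₗ_apply, mk_apply, coe_comp, Function.comp_apply, rTensor_tmul, lTensor_tmul,
    LinearEquiv.coe_coe]
  generalize h y = u
  induction u using TensorProduct.induction_on with
  | zero => simp
  | tmul a b => simp
  | add a b ha hb => simp [tmul_add, add_tmul, ha, hb]

theorem aux_P6 :
    (tensorTensorTensorComm R (M ⊗[R] M) (M ⊗[R] M) (M ⊗[R] M) (M ⊗[R] M)).toLinearMap ∘ₗ
      (map (tensorTensorTensorComm R M M M M).toLinearMap
        (tensorTensorTensorComm R M M M M).toLinearMap) ∘ₗ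
      (tensorTensorTensorComm R (M ⊗[R] M) (M ⊗[R] M) (M ⊗[R] M) (M ⊗[R] M)).toLinearMap
    = (map (tensorTensorTensorComm R M M M M).toLinearMap
        (tensorTensorTensorComm R M M M M).toLinearMap) ∘ₗ
      (tensorTensorTensorComm R (M ⊗[R] M) (M ⊗[R] M) (M ⊗[R] M) (M ⊗[R] M)).toLinearMap ∘ₗ
      (map (tensorTensorTensorComm R M M M M).toLinearMap
        (tensorTensorTensorComm R M M M M).toLinearMap) := by
  ext; simp

/-- Middle-swap invariance of the iterated comultiplication of a cocommutative coalgebra. -/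
theorem aux_lemmaD [Coalgebra R M]
    (hcc : (TensorProduct.comm R M M).toLinearMap ∘ₗ (Coalgebra.comul (R := R) (A := M))
      = Coalgebra.comul) :
    (tensorTensorTensorComm R M M M M).toLinearMap ∘ₗ
      map (Coalgebra.comul (R := R) (A := M)) (Coalgebra.comul (R := R) (A := M)) ∘ₗ
        Coalgebra.comul
    = map (Coalgebra.comul (R := R) (A := M)) (Coalgebra.comul (R := R) (A := M)) ∘ₗ
        Coalgebra.comul := by
  set Δ : M →ₗ[R] M ⊗[R] M := Coalgebra.comul with hΔ
  set β : (M ⊗[R] (M ⊗[R] M)) ⊗[R] M →ₗ[R] (M ⊗[R] M) ⊗[R] (M ⊗[R] M) :=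
    (TensorProduct.assoc R (M ⊗[R] M) M M).toLinearMap ∘ₗ
      ((TensorProduct.assoc R M M M).symm.toLinearMap.rTensor M) with hβ
  have key : map Δ Δ ∘ₗ Δ
      = β ∘ₗ ((Δ.lTensor M).rTensor M) ∘ₗ (TensorProduct.assoc R M M M).symm.toLinearMap
          ∘ₗ (Δ.lTensor M) ∘ₗ Δ := by
    have c1 : Δ.lTensor M ∘ₗ Δ = (TensorProduct.assoc R M M M).toLinearMap ∘ₗ
        Δ.rTensor M ∘ₗ Δ := Coalgebra.coassoc.symm
    have c2 : Δ.rTensor M ∘ₗ Δ = (TensorProduct.assoc R M M M).symm.toLinearMap ∘ₗ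
        Δ.lTensor M ∘ₗ Δ := by
      rw [c1]; ext f; simp
    calc map Δ Δ ∘ₗ Δ = Δ.rTensor (M ⊗[R] M) ∘ₗ Δ.lTensor M ∘ₗ Δ := by
          rw [← LinearMap.comp_assoc, rTensor_comp_lTensor]
      _ = (Δ.rTensor (M ⊗[R] M) ∘ₗ (TensorProduct.assoc R M M M).toLinearMap) ∘ₗ
            Δ.rTensor M ∘ₗ Δ := by rw [c1]; rfl
      _ = (TensorProduct.assoc R (M ⊗[R] M) M M).toLinearMap ∘ₗ ((Δ.rTensor M).rTensor M) ∘ₗ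
            Δ.rTensor M ∘ₗ Δ := by rw [aux_assoc_nat]; rfl
      _ = (TensorProduct.assoc R (M ⊗[R] M) M M).toLinearMap ∘ₗ
            ((Δ.rTensor M ∘ₗ Δ).rTensor M) ∘ₗ Δ := by
          rw [rTensor_comp]; rfl
      _ = (TensorProduct.assoc R (M ⊗[R] M) M M).toLinearMap ∘ₗ
            (((TensorProduct.assoc R M M M).symm.toLinearMap ∘ₗ Δ.lTensor M ∘ₗ Δ).rTensor M)
            ∘ₗ Δ := by rw [← c2]
      _ = β ∘ₗ ((Δ.lTensor M).rTensor M) ∘ₗ ((Δ ∘ₗ LinearMap.id).rTensor M) ∘ₗ Δ := by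
          rw [hβ]; simp only [rTensor_comp, LinearMap.comp_assoc, LinearMap.comp_id]
      _ = β ∘ₗ ((Δ.lTensor M).rTensor M) ∘ₗ (TensorProduct.assoc R M M M).symm.toLinearMap
            ∘ₗ (Δ.lTensor M) ∘ₗ Δ := by rw [LinearMap.comp_id, c2]
  calc (tensorTensorTensorComm R M M M M).toLinearMap ∘ₗ map Δ Δ ∘ₗ Δ
      = ((tensorTensorTensorComm R M M M M).toLinearMap ∘ₗ β ∘ₗ ((Δ.lTensor M).rTensor M)) ∘ₗ
          (TensorProduct.assoc R M M M).symm.toLinearMap ∘ₗ (Δ.lTensor M) ∘ₗ Δ := by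
        rw [key]; simp only [LinearMap.comp_assoc]
    _ = (β ∘ₗ ((((TensorProduct.comm R M M).toLinearMap ∘ₗ Δ).lTensor M).rTensor M)) ∘ₗ
          (TensorProduct.assoc R M M M).symm.toLinearMap ∘ₗ (Δ.lTensor M) ∘ₗ Δ := by
        rw [aux_midswap]
    _ = map Δ Δ ∘ₗ Δ := by rw [hcc, key]; simp only [LinearMap.comp_assoc]

end pure

section bialg
variable {K B : Type*} [Field K] [CommRing B] [Bialgebra K B] (σ : K → (B →ₐ[K] B))

/-- `e p q : B ⊗ B → B`, `f ⊗ g ↦ σ(p) f · σ(q) g`. -/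
noncomputable def auxE (p q : K) : B ⊗[K] B →ₗ[K] B :=
  LinearMap.mul' K B ∘ₗ map (σ p).toLinearMap (σ q).toLinearMap

/-- The comultiplication of `B ⊗ B`. -/
noncomputable def auxD : B ⊗[K] B →ₗ[K] (B ⊗[K] B) ⊗[K] (B ⊗[K] B) :=
  (tensorTensorTensorComm K B B B B).toLinearMap ∘ₗ
    map (Coalgebra.comul (R := K) (A := B)) Coalgebra.comul

theorem act_eq (M : Matrix (Fin 2) (Fin 2) K) :
    inducedMatrixAction K B σ M
      = map (auxE σ (M 0 0) (M 1 0)) (auxE σ (M 0 1) (M 1 1)) ∘ₗ auxD (K := K) (B := B) := by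
  apply TensorProduct.ext'
  intro x y
  simp only [inducedMatrixAction, auxD, auxE, coe_comp, Function.comp_apply, map_tmul]
  generalize Coalgebra.comul (R := K) x = u
  generalize Coalgebra.comul (R := K) y = v
  induction u using TensorProduct.induction_on with
  | zero => simp
  | tmul a b =>
    induction v using TensorProduct.induction_on with
    | zero => simp
    | tmul c d => simp
    | add c d hc hd => simp only [tmul_add, map_add, hc, hd]
  | add a b ha hb => simp only [add_tmul, map_add, ha, hb]

theorem auxE_col (hmul : ∀ lam mu : K, σ (lam * mu) = (σ lam).comp (σ mu))
    (hadd : ∀ lam mu : K, (σ (lam + mu)).toLinearMap =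
      (LinearMap.mul' K B) ∘ₗ
        (TensorProduct.map (σ lam).toLinearMap (σ mu).toLinearMap) ∘ₗ
        Coalgebra.comul)
    (M : Matrix (Fin 2) (Fin 2) K) (p q : K) :
    auxE σ (M 0 0 * p + M 0 1 * q) (M 1 0 * p + M 1 1 * q)
      = auxE σ p q ∘ₗ inducedMatrixAction K B σ M := by
  have hcomp : ∀ (lam mu : K) (b : B), σ lam (σ mu b) = σ (lam * mu) b := by
    intro lam mu b
    rw [hmul lam mu]; rfl
  apply TensorProduct.ext'
  intro x y
  have h1 := LinearMap.congr_fun (hadd (M 0 0 * p) (M 0 1 * q)) x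
  have h2 := LinearMap.congr_fun (hadd (M 1 0 * p) (M 1 1 * q)) y
  simp only [AlgHom.toLinearMap_apply, coe_comp, Function.comp_apply] at h1 h2
  simp only [inducedMatrixAction, auxE, coe_comp, Function.comp_apply, map_tmul, mul'_apply,
    AlgHom.toLinearMap_apply, h1, h2]
  generalize Coalgebra.comul (R := K) x = u
  generalize Coalgebra.comul (R := K) y = v
  induction u using TensorProduct.induction_on with
  | zero => simp
  | tmul a b =>
    induction v using TensorProduct.induction_on with
    | zero => simp
    | tmul c d =>
      simp only [map_tmul, mul'_apply, AlgHom.toLinearMap_apply, LinearEquiv.coe_coe]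
      rw [tensorTensorTensorComm_tmul]
      simp only [map_tmul, mul'_apply, AlgHom.toLinearMap_apply, map_mul, hcomp]
      rw [mul_comm p (M 0 0), mul_comm p (M 1 0), mul_comm q (M 0 1), mul_comm q (M 1 1)]
      ring
    | add c d hc hd => simp only [tmul_add, map_add, mul_add, add_mul, hc, hd]
  | add a b ha hb => simp only [add_tmul, map_add, mul_add, add_mul, ha, hb]

theorem comul_comp_auxE
    (hσcomul : ∀ lam : K, (Coalgebra.comul (R := K) (A := B)) ∘ₗ (σ lam).toLinearMap =
      (TensorProduct.map (σ lam).toLinearMap (σ lam).toLinearMap) ∘ₗ Coalgebra.comul)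
    (p q : K) :
    (Coalgebra.comul (R := K) (A := B)) ∘ₗ auxE σ p q
      = map (auxE σ p q) (auxE σ p q) ∘ₗ auxD (K := K) (B := B) := by
  apply TensorProduct.ext'
  intro x y
  have hp := LinearMap.congr_fun (hσcomul p) x
  have hq := LinearMap.congr_fun (hσcomul q) y
  simp only [coe_comp, Function.comp_apply, AlgHom.toLinearMap_apply] at hp hq
  have hmul' : Coalgebra.comul (R := K) (σ p x * σ q y)
      = Coalgebra.comul (R := K) (σ p x) * Coalgebra.comul (σ q y) := by
    simpa using map_mul (Bialgebra.comulAlgHom K B) (σ p x) (σ q y)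
  simp only [auxE, auxD, coe_comp, Function.comp_apply, map_tmul, mul'_apply,
    AlgHom.toLinearMap_apply, hmul', hp, hq]
  generalize Coalgebra.comul (R := K) x = u
  generalize Coalgebra.comul (R := K) y = v
  induction u using TensorProduct.induction_on with
  | zero => simp
  | tmul a b =>
    induction v using TensorProduct.induction_on with
    | zero => simp
    | tmul c d =>
      simp [Algebra.TensorProduct.tmul_mul_tmul]
    | add c d hc hd => simp only [tmul_add, map_add, mul_add, hc, hd]
  | add a b ha hb => simp only [add_tmul, map_add, add_mul, ha, hb]

theorem aux_F6
    (hcocomm : (TensorProduct.comm K B B).toLinearMap ∘ₗ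
        (Coalgebra.comul (R := K) (A := B)) = Coalgebra.comul) :
    ((tensorTensorTensorComm K (B ⊗[K] B) (B ⊗[K] B) (B ⊗[K] B) (B ⊗[K] B)).toLinearMap) ∘ₗ map (auxD (K := K) (B := B)) auxD ∘ₗ auxD
      = map (auxD (K := K) (B := B)) auxD ∘ₗ auxD := by
  have hauxD : auxD (K := K) (B := B) = ((tensorTensorTensorComm K B B B B).toLinearMap) ∘ₗ (map (Coalgebra.comul (R := K) (A := B)) (Coalgebra.comul (R := K) (A := B))) := rfl
  have hswap : ((tensorTensorTensorComm K (B ⊗[K] B) (B ⊗[K] B) (B ⊗[K] B) (B ⊗[K] B)).toLinearMap) ∘ₗ map (map (Coalgebra.comul (R := K) (A := B)) (Coalgebra.comul (R := K) (A := B))) (map (Coalgebra.comul (R := K) (A := B)) (Coalgebra.comul (R := K) (A := B))) = map (map (Coalgebra.comul (R := K) (A := B)) (Coalgebra.comul (R := K) (A := B))) (map (Coalgebra.comul (R := K) (A := B)) (Coalgebra.comul (R := K) (A := B))) ∘ₗ ((tensorTensorTensorComm K B B B B).toLinearMap) := by ext; simp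
  have hD : ((tensorTensorTensorComm K B B B B).toLinearMap) ∘ₗ (map (Coalgebra.comul (R := K) (A := B)) (Coalgebra.comul (R := K) (A := B))) ∘ₗ (Coalgebra.comul (R := K) (A := B)) = (map (Coalgebra.comul (R := K) (A := B)) (Coalgebra.comul (R := K) (A := B))) ∘ₗ (Coalgebra.comul (R := K) (A := B)) := aux_lemmaD hcocomm
  have hP6 : ((tensorTensorTensorComm K (B ⊗[K] B) (B ⊗[K] B) (B ⊗[K] B) (B ⊗[K] B)).toLinearMap) ∘ₗ (map ((tensorTensorTensorComm K B B B B).toLinearMap) ((tensorTensorTensorComm K B B B B).toLinearMap)) ∘ₗ ((tensorTensorTensorComm K (B ⊗[K] B) (B ⊗[K] B) (B ⊗[K] B) (B ⊗[K] B)).toLinearMap) = (map ((tensorTensorTensorComm K B B B B).toLinearMap) ((tensorTensorTensorComm K B B B B).toLinearMap)) ∘ₗ ((tensorTensorTensorComm K (B ⊗[K] B) (B ⊗[K] B) (B ⊗[K] B) (B ⊗[K] B)).toLinearMap) ∘ₗ (map ((tensorTensorTensorComm K B B B B).toLinearMap) ((tensorTensorTensorComm K B B B B).toLinearMap)) :=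 aux_P6
  have star : map (auxD (K := K) (B := B)) auxD ∘ₗ auxD
      = map ((tensorTensorTensorComm K B B B B).toLinearMap) ((tensorTensorTensorComm K B B B B).toLinearMap) ∘ₗ ((tensorTensorTensorComm K (B ⊗[K] B) (B ⊗[K] B) (B ⊗[K] B) (B ⊗[K] B)).toLinearMap) ∘ₗ map ((map (Coalgebra.comul (R := K) (A := B)) (Coalgebra.comul (R := K) (A := B))) ∘ₗ (Coalgebra.comul (R := K) (A := B))) ((map (Coalgebra.comul (R := K) (A := B)) (Coalgebra.comul (R := K) (A := B))) ∘ₗ (Coalgebra.comul (R := K) (A := B))) := by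
    rw [hauxD]
    calc map (((tensorTensorTensorComm K B B B B).toLinearMap) ∘ₗ (map (Coalgebra.comul (R := K) (A := B)) (Coalgebra.comul (R := K) (A := B)))) (((tensorTensorTensorComm K B B B B).toLinearMap) ∘ₗ (map (Coalgebra.comul (R := K) (A := B)) (Coalgebra.comul (R := K) (A := B)))) ∘ₗ ((tensorTensorTensorComm K B B B B).toLinearMap) ∘ₗ (map (Coalgebra.comul (R := K) (A := B)) (Coalgebra.comul (R := K) (A := B)))
        = (map ((tensorTensorTensorComm K B B B B).toLinearMap) ((tensorTensorTensorComm K B B B B).toLinearMap) ∘ₗ map (map (Coalgebra.comul (R := K) (A := B)) (Coalgebra.comul (R := K) (A := B))) (map (Coalgebra.comul (R := K) (A := B)) (Coalgebra.comul (R := K) (A := B)))) ∘ₗ (((tensorTensorTensorComm K B B B B).toLinearMap) ∘ₗ (map (Coalgebra.comul (R := K) (A := B)) (Coalgebra.comul (R := K) (A := B)))) := by rw [map_comp]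
      _ = map ((tensorTensorTensorComm K B B B B).toLinearMap) ((tensorTensorTensorComm K B B B B).toLinearMap) ∘ₗ ((map (map (Coalgebra.comul (R := K) (A := B)) (Coalgebra.comul (R := K) (A := B))) (map (Coalgebra.comul (R := K) (A := B)) (Coalgebra.comul (R := K) (A := B))) ∘ₗ ((tensorTensorTensorComm K B B B B).toLinearMap)) ∘ₗ (map (Coalgebra.comul (R := K) (A := B)) (Coalgebra.comul (R := K) (A := B)))) := by
          simp only [LinearMap.comp_assoc]
      _ = map ((tensorTensorTensorComm K B B B B).toLinearMap) ((tensorTensorTensorComm K B B B B).toLinearMap) ∘ₗ ((((tensorTensorTensorComm K (B ⊗[K] B) (B ⊗[K] B) (B ⊗[K] B) (B ⊗[K] B)).toLinearMap) ∘ₗ map (map (Coalgebra.comul (R := K) (A := B)) (Coalgebra.comul (R := K) (A := B))) (map (Coalgebra.comul (R := K) (A := B)) (Coalgebra.comul (R := K) (A := B)))) ∘ₗ (map (Coalgebra.comul (R := K) (A := B)) (Coalgebra.comul (R := K) (A := B)))) := by rw [← hswap]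
      _ = map ((tensorTensorTensorComm K B B B B).toLinearMap) ((tensorTensorTensorComm K B B B B).toLinearMap) ∘ₗ ((tensorTensorTensorComm K (B ⊗[K] B) (B ⊗[K] B) (B ⊗[K] B) (B ⊗[K] B)).toLinearMap) ∘ₗ map ((map (Coalgebra.comul (R := K) (A := B)) (Coalgebra.comul (R := K) (A := B))) ∘ₗ (Coalgebra.comul (R := K) (A := B))) ((map (Coalgebra.comul (R := K) (A := B)) (Coalgebra.comul (R := K) (A := B))) ∘ₗ (Coalgebra.comul (R := K) (A := B))) := by
          simp only [LinearMap.comp_assoc]; rw [← map_comp]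
  calc ((tensorTensorTensorComm K (B ⊗[K] B) (B ⊗[K] B) (B ⊗[K] B) (B ⊗[K] B)).toLinearMap) ∘ₗ map (auxD (K := K) (B := B)) auxD ∘ₗ auxD
      = ((tensorTensorTensorComm K (B ⊗[K] B) (B ⊗[K] B) (B ⊗[K] B) (B ⊗[K] B)).toLinearMap) ∘ₗ map ((tensorTensorTensorComm K B B B B).toLinearMap) ((tensorTensorTensorComm K B B B B).toLinearMap) ∘ₗ ((tensorTensorTensorComm K (B ⊗[K] B) (B ⊗[K] B) (B ⊗[K] B) (B ⊗[K] B)).toLinearMap) ∘ₗ map ((map (Coalgebra.comul (R := K) (A := B)) (Coalgebra.comul (R := K) (A := B))) ∘ₗ (Coalgebra.comul (R := K) (A := B))) ((map (Coalgebra.comul (R := K) (A := B)) (Coalgebra.comul (R := K) (A := B))) ∘ₗ (Coalgebra.comul (R := K) (A := B))) := by rw [star]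
    _ = (((tensorTensorTensorComm K (B ⊗[K] B) (B ⊗[K] B) (B ⊗[K] B) (B ⊗[K] B)).toLinearMap) ∘ₗ map ((tensorTensorTensorComm K B B B B).toLinearMap) ((tensorTensorTensorComm K B B B B).toLinearMap) ∘ₗ ((tensorTensorTensorComm K (B ⊗[K] B) (B ⊗[K] B) (B ⊗[K] B) (B ⊗[K] B)).toLinearMap)) ∘ₗ map ((map (Coalgebra.comul (R := K) (A := B)) (Coalgebra.comul (R := K) (A := B))) ∘ₗ (Coalgebra.comul (R := K) (A := B))) ((map (Coalgebra.comul (R := K) (A := B)) (Coalgebra.comul (R := K) (A := B))) ∘ₗ (Coalgebra.comul (R := K) (A := B))) := by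
        simp only [LinearMap.comp_assoc]
    _ = (map ((tensorTensorTensorComm K B B B B).toLinearMap) ((tensorTensorTensorComm K B B B B).toLinearMap) ∘ₗ ((tensorTensorTensorComm K (B ⊗[K] B) (B ⊗[K] B) (B ⊗[K] B) (B ⊗[K] B)).toLinearMap) ∘ₗ map ((tensorTensorTensorComm K B B B B).toLinearMap) ((tensorTensorTensorComm K B B B B).toLinearMap)) ∘ₗ map ((map (Coalgebra.comul (R := K) (A := B)) (Coalgebra.comul (R := K) (A := B))) ∘ₗ (Coalgebra.comul (R := K) (A := B))) ((map (Coalgebra.comul (R := K) (A := B)) (Coalgebra.comul (R := K) (A := B))) ∘ₗ (Coalgebra.comul (R := K) (A := B))) := by rw [hP6]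
    _ = map ((tensorTensorTensorComm K B B B B).toLinearMap) ((tensorTensorTensorComm K B B B B).toLinearMap) ∘ₗ ((tensorTensorTensorComm K (B ⊗[K] B) (B ⊗[K] B) (B ⊗[K] B) (B ⊗[K] B)).toLinearMap) ∘ₗ map (((tensorTensorTensorComm K B B B B).toLinearMap) ∘ₗ (map (Coalgebra.comul (R := K) (A := B)) (Coalgebra.comul (R := K) (A := B))) ∘ₗ (Coalgebra.comul (R := K) (A := B))) (((tensorTensorTensorComm K B B B B).toLinearMap) ∘ₗ (map (Coalgebra.comul (R := K) (A := B)) (Coalgebra.comul (R := K) (A := B))) ∘ₗ (Coalgebra.comul (R := K) (A := B))) := by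
        simp only [LinearMap.comp_assoc]; rw [← map_comp]
    _ = map ((tensorTensorTensorComm K B B B B).toLinearMap) ((tensorTensorTensorComm K B B B B).toLinearMap) ∘ₗ ((tensorTensorTensorComm K (B ⊗[K] B) (B ⊗[K] B) (B ⊗[K] B) (B ⊗[K] B)).toLinearMap) ∘ₗ map ((map (Coalgebra.comul (R := K) (A := B)) (Coalgebra.comul (R := K) (A := B))) ∘ₗ (Coalgebra.comul (R := K) (A := B))) ((map (Coalgebra.comul (R := K) (A := B)) (Coalgebra.comul (R := K) (A := B))) ∘ₗ (Coalgebra.comul (R := K) (A := B))) := by rw [hD]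
    _ = map (auxD (K := K) (B := B)) auxD ∘ₗ auxD := star.symm

theorem auxD_mapE
    (hcocomm : (TensorProduct.comm K B B).toLinearMap ∘ₗ
        (Coalgebra.comul (R := K) (A := B)) = Coalgebra.comul)
    (e1 e2 : B ⊗[K] B →ₗ[K] B)
    (h1 : (Coalgebra.comul (R := K) (A := B)) ∘ₗ e1 = map e1 e1 ∘ₗ auxD (K := K) (B := B))
    (h2 : (Coalgebra.comul (R := K) (A := B)) ∘ₗ e2 = map e2 e2 ∘ₗ auxD (K := K) (B := B)) :
    auxD (K := K) (B := B) ∘ₗ (map e1 e2 ∘ₗ auxD)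
      = map (map e1 e2 ∘ₗ auxD (K := K) (B := B)) (map e1 e2 ∘ₗ auxD) ∘ₗ auxD := by
  have hauxD : auxD (K := K) (B := B) = ((tensorTensorTensorComm K B B B B).toLinearMap) ∘ₗ (map (Coalgebra.comul (R := K) (A := B)) (Coalgebra.comul (R := K) (A := B))) := rfl
  have hnat : ((tensorTensorTensorComm K B B B B).toLinearMap) ∘ₗ map (map e1 e1) (map e2 e2) = map (map e1 e2) (map e1 e2) ∘ₗ ((tensorTensorTensorComm K (B ⊗[K] B) (B ⊗[K] B) (B ⊗[K] B) (B ⊗[K] B)).toLinearMap) := by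
    ext; simp
  have step1 : auxD (K := K) (B := B) ∘ₗ map e1 e2
      = map (map e1 e2) (map e1 e2) ∘ₗ ((tensorTensorTensorComm K (B ⊗[K] B) (B ⊗[K] B) (B ⊗[K] B) (B ⊗[K] B)).toLinearMap) ∘ₗ map (auxD (K := K) (B := B)) auxD := by
    calc auxD (K := K) (B := B) ∘ₗ map e1 e2
        = ((tensorTensorTensorComm K B B B B).toLinearMap) ∘ₗ ((map (Coalgebra.comul (R := K) (A := B)) (Coalgebra.comul (R := K) (A := B))) ∘ₗ map e1 e2) := by rw [hauxD]; simp only [LinearMap.comp_assoc]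
      _ = ((tensorTensorTensorComm K B B B B).toLinearMap) ∘ₗ map ((Coalgebra.comul (R := K) (A := B)) ∘ₗ e1) ((Coalgebra.comul (R := K) (A := B)) ∘ₗ e2) := by rw [← map_comp]
      _ = ((tensorTensorTensorComm K B B B B).toLinearMap) ∘ₗ map (map e1 e1 ∘ₗ auxD (K := K) (B := B)) (map e2 e2 ∘ₗ auxD) := by
          rw [h1, h2]
      _ = (((tensorTensorTensorComm K B B B B).toLinearMap) ∘ₗ map (map e1 e1) (map e2 e2)) ∘ₗ map (auxD (K := K) (B := B)) auxD := by
          rw [map_comp]; simp only [LinearMap.comp_assoc]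
      _ = (map (map e1 e2) (map e1 e2) ∘ₗ ((tensorTensorTensorComm K (B ⊗[K] B) (B ⊗[K] B) (B ⊗[K] B) (B ⊗[K] B)).toLinearMap)) ∘ₗ map (auxD (K := K) (B := B)) auxD := by
          rw [hnat]
      _ = map (map e1 e2) (map e1 e2) ∘ₗ ((tensorTensorTensorComm K (B ⊗[K] B) (B ⊗[K] B) (B ⊗[K] B) (B ⊗[K] B)).toLinearMap) ∘ₗ map (auxD (K := K) (B := B)) auxD := by
          simp only [LinearMap.comp_assoc]
  calc auxD (K := K) (B := B) ∘ₗ (map e1 e2 ∘ₗ auxD)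
      = (auxD (K := K) (B := B) ∘ₗ map e1 e2) ∘ₗ auxD := by
        simp only [LinearMap.comp_assoc]
    _ = map (map e1 e2) (map e1 e2) ∘ₗ ((tensorTensorTensorComm K (B ⊗[K] B) (B ⊗[K] B) (B ⊗[K] B) (B ⊗[K] B)).toLinearMap) ∘ₗ map (auxD (K := K) (B := B)) auxD ∘ₗ auxD := by
        rw [step1]; simp only [LinearMap.comp_assoc]
    _ = map (map e1 e2) (map e1 e2) ∘ₗ map (auxD (K := K) (B := B)) auxD ∘ₗ auxD := by
        rw [aux_F6 hcocomm]
    _ = map (map e1 e2 ∘ₗ auxD (K := K) (B := B)) (map e1 e2 ∘ₗ auxD) ∘ₗ auxD := by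
        simp only [← LinearMap.comp_assoc]; rw [← map_comp]

theorem auxD_act
    (hcocomm : (TensorProduct.comm K B B).toLinearMap ∘ₗ
        (Coalgebra.comul (R := K) (A := B)) = Coalgebra.comul)
    (hσcomul : ∀ lam : K, (Coalgebra.comul (R := K) (A := B)) ∘ₗ (σ lam).toLinearMap =
      (TensorProduct.map (σ lam).toLinearMap (σ lam).toLinearMap) ∘ₗ Coalgebra.comul)
    (M : Matrix (Fin 2) (Fin 2) K) :
    auxD (K := K) (B := B) ∘ₗ inducedMatrixAction K B σ M
      = map (inducedMatrixAction K B σ M) (inducedMatrixAction K B σ M) ∘ₗ auxD := by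
  rw [act_eq σ M]
  exact auxD_mapE hcocomm (auxE σ (M 0 0) (M 1 0)) (auxE σ (M 0 1) (M 1 1))
    (comul_comp_auxE σ hσcomul (M 0 0) (M 1 0)) (comul_comp_auxE σ hσcomul (M 0 1) (M 1 1))

end bialg
end InducedMatrixActionAux

open InducedMatrixActionAux in
/-- For a commutative cocommutative bialgebra `B` over `K` with a
scaling `σ`, the induced matrix action on `B ⊗ B` is a contravariant monoid action of
the multiplicative monoid of `2 × 2` matrices: `(M · N)* = N* ∘ M*`. -/
theorem inducedMatrixAction_mul
    (K B : Type*) [Field K] [CommRing B] [Bialgebra K B]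
    (hcocomm : (TensorProduct.comm K B B).toLinearMap ∘ₗ
        (Coalgebra.comul (R := K) (A := B)) = Coalgebra.comul)
    (σ : K → (B →ₐ[K] B))
    (hσcomul : ∀ lam : K, (Coalgebra.comul (R := K) (A := B)) ∘ₗ (σ lam).toLinearMap =
      (TensorProduct.map (σ lam).toLinearMap (σ lam).toLinearMap) ∘ₗ Coalgebra.comul)
    (hσcounit : ∀ lam : K, (Coalgebra.counit (R := K) (A := B)) ∘ₗ (σ lam).toLinearMap =
      Coalgebra.counit)
    (hone : σ 1 = AlgHom.id K B)
    (hmul : ∀ lam mu : K, σ (lam * mu) = (σ lam).comp (σ mu))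
    (hzero : σ 0 = (Algebra.ofId K B).comp (Bialgebra.counitAlgHom K B))
    (hadd : ∀ lam mu : K, (σ (lam + mu)).toLinearMap =
      (LinearMap.mul' K B) ∘ₗ
        (TensorProduct.map (σ lam).toLinearMap (σ mu).toLinearMap) ∘ₗ
        Coalgebra.comul)
    (M N : Matrix (Fin 2) (Fin 2) K) :
    inducedMatrixAction K B σ (M * N) =
      (inducedMatrixAction K B σ N) ∘ₗ (inducedMatrixAction K B σ M) := by
  have hentry : ∀ i j, (M * N) i j = M i 0 * N 0 j + M i 1 * N 1 j := by
    intro i j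
    simp [Matrix.mul_apply, Fin.sum_univ_two]
  calc inducedMatrixAction K B σ (M * N)
      = TensorProduct.map (auxE σ ((M * N) 0 0) ((M * N) 1 0))
          (auxE σ ((M * N) 0 1) ((M * N) 1 1)) ∘ₗ auxD (K := K) (B := B) := act_eq σ (M * N)
    _ = TensorProduct.map (auxE σ (N 0 0) (N 1 0) ∘ₗ inducedMatrixAction K B σ M)
          (auxE σ (N 0 1) (N 1 1) ∘ₗ inducedMatrixAction K B σ M) ∘ₗ
            auxD (K := K) (B := B) := by
        rw [hentry 0 0, hentry 1 0, hentry 0 1, hentry 1 1,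
          auxE_col σ hmul hadd M (N 0 0) (N 1 0), auxE_col σ hmul hadd M (N 0 1) (N 1 1)]
    _ = TensorProduct.map (auxE σ (N 0 0) (N 1 0)) (auxE σ (N 0 1) (N 1 1)) ∘ₗ
          (auxD (K := K) (B := B) ∘ₗ inducedMatrixAction K B σ M) := by
        rw [TensorProduct.map_comp, auxD_act σ hcocomm hσcomul M]
        simp only [LinearMap.comp_assoc]
    _ = (TensorProduct.map (auxE σ (N 0 0) (N 1 0)) (auxE σ (N 0 1) (N 1 1)) ∘ₗ
          auxD (K := K) (B := B)) ∘ₗ inducedMatrixAction K B σ M := by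
        simp only [LinearMap.comp_assoc]
    _ = (inducedMatrixAction K B σ N) ∘ₗ (inducedMatrixAction K B σ M) := by
        rw [← act_eq σ N]
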